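/- arXiv:1002.3357 — 2 statements merged into one kernel-verified Lean document; each statement's English description precedes it below -/
import Mathlib

section
/- Let X be a set, f₁, f₂ : X → X, h : X → ℝ nonnegative, d₁, d₂ ≥ 2, r ≥ 1, C ≥ 0, and suppose (1/d₁)h(f₁(Q)) + (1/d₂)h(f₂(Q)) + C ≥ (1 + 1/r)·h(Q) for all Q ∈ X. Let Φ be the monoid of maps generated by f₁ and f₂ under composition, and set δ = (1/(1+1/r))(1/d₁ + 1/d₂). If δ < 1 and P ∈ X has finite Φ-orbit Φ(P) = {φ(P) : φ ∈ Φ}, then h(P) ≤ (1 + 1/r)·δ^{M+1}·sup_{R ∈ Φ(P)} h(R) + C/(1−δ) for every M ≥ 0; hence h(P) ≤ C/(1−δ). -/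
/-- Composition of the maps indexed by a word `I`: `f_I = f_{i₁} ∘ ⋯ ∘ f_{i_m}`. -/
def wordComp {X : Type*} (f : Fin 2 → X → X) : List (Fin 2) → X → X
  | [], P => P
  | i :: I, P => f i (wordComp f I P)

theorem stmt_6 {X : Type*} (f : Fin 2 → X → X) (h : X → ℝ)
    (h0 : ∀ P, 0 ≤ h P) (d : Fin 2 → ℝ) (hd : ∀ i, 2 ≤ d i)
    (r : ℝ) (hr : 1 ≤ r) (C : ℝ) (hC : 0 ≤ C)
    (hyp : ∀ Q : X,
      (1 + 1 / r) * h Q ≤ (1 / d 0) * h (f 0 Q) + (1 / d 1) * h (f 1 Q) + C)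
    (hδ : (1 / (1 + 1 / r)) * (1 / d 0 + 1 / d 1) < 1)
    (P : X) (hfin : (Set.range fun I : List (Fin 2) => wordComp f I P).Finite) :
    (∀ M : ℕ,
      h P ≤ (1 + 1 / r) * ((1 / (1 + 1 / r)) * (1 / d 0 + 1 / d 1)) ^ (M + 1) *
          sSup (h '' (Set.range fun I : List (Fin 2) => wordComp f I P)) +
        C / (1 - (1 / (1 + 1 / r)) * (1 / d 0 + 1 / d 1))) ∧
    h P ≤ C / (1 - (1 / (1 + 1 / r)) * (1 / d 0 + 1 / d 1)) := by
  have hr0 : (0:ℝ) < r := lt_of_lt_of_le one_pos hr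
  have hρ : (0:ℝ) < 1 + 1 / r := by positivity
  have hρ1 : (1:ℝ) ≤ 1 + 1 / r := by
    have : (0:ℝ) ≤ 1 / r := by positivity
    linarith
  have hd0 : (0:ℝ) < d 0 := lt_of_lt_of_le two_pos (hd 0)
  have hd1 : (0:ℝ) < d 1 := lt_of_lt_of_le two_pos (hd 1)
  set δ : ℝ := (1 / (1 + 1 / r)) * (1 / d 0 + 1 / d 1) with hδdef
  have hδ0 : 0 < δ := by rw [hδdef]; positivity
  have h1δ : 0 < 1 - δ := by linarith
  set T := sSup (h '' (Set.range fun I : List (Fin 2) => wordComp f I P)) with hT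
  have hbdd : BddAbove (h '' (Set.range fun I : List (Fin 2) => wordComp f I P)) :=
    (hfin.image h).bddAbove
  have hTge : ∀ I : List (Fin 2), h (wordComp f I P) ≤ T :=
    fun I => le_csSup hbdd ⟨_, ⟨I, rfl⟩, rfl⟩
  have hT0 : 0 ≤ T := le_trans (h0 _) (hTge [])
  set c : ℝ := C / (1 + 1 / r) with hc
  have hc0 : 0 ≤ c := by positivity
  have key : ∀ M : ℕ, ∀ I : List (Fin 2),
      h (wordComp f I P) ≤ δ ^ M * T + c * ∑ k ∈ Finset.range M, δ ^ k := by
    intro M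
    induction M with
    | zero => intro I; simpa using hTge I
    | succ M ih =>
      intro I
      set Q := wordComp f I P with hQ
      have h0' : h (f 0 Q) ≤ δ ^ M * T + c * ∑ k ∈ Finset.range M, δ ^ k := ih (0 :: I)
      have h1' : h (f 1 Q) ≤ δ ^ M * T + c * ∑ k ∈ Finset.range M, δ ^ k := ih (1 :: I)
      have hyQ := hyp Q
      set B : ℝ := δ ^ M * T + c * ∑ k ∈ Finset.range M, δ ^ k with hB
      have hstep : (1 + 1 / r) * h Q ≤ (1 / d 0 + 1 / d 1) * B + C := by
        have e0 : (1 / d 0) * h (f 0 Q) ≤ (1 / d 0) * B :=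
          mul_le_mul_of_nonneg_left h0' (by positivity)
        have e1 : (1 / d 1) * h (f 1 Q) ≤ (1 / d 1) * B :=
          mul_le_mul_of_nonneg_left h1' (by positivity)
        nlinarith [e0, e1, hyQ]
      have hQle : h Q ≤ δ * B + c := by
        have := mul_le_mul_of_nonneg_left hstep (le_of_lt (by positivity : (0:ℝ) < 1 / (1 + 1 / r)))
        have hne : (1 + 1 / r) ≠ 0 := ne_of_gt hρ
        calc h Q = (1 / (1 + 1 / r)) * ((1 + 1 / r) * h Q) := by
              field_simp
          _ ≤ (1 / (1 + 1 / r)) * ((1 / d 0 + 1 / d 1) * B + C) := this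
          _ = δ * B + c := by rw [hδdef, hc]; ring
      calc h Q ≤ δ * B + c := hQle
        _ = δ ^ (M + 1) * T + c * ∑ k ∈ Finset.range (M + 1), δ ^ k := by
            rw [hB, geom_sum_succ]; ring
  have hsum : ∀ N : ℕ, (∑ k ∈ Finset.range N, δ ^ k) ≤ 1 / (1 - δ) := by
    intro N
    rw [geom_sum_eq (ne_of_lt hδ)]
    have e : (δ ^ N - 1) / (δ - 1) = (1 - δ ^ N) / (1 - δ) := by
      rw [← neg_div_neg_eq, neg_sub, neg_sub]
    rw [e]
    gcongr
    nlinarith [pow_nonneg hδ0.le N]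
  have hcC : c / 1 ≤ C := by
    rw [div_one, hc]
    exact div_le_self hC hρ1
  have main : ∀ M : ℕ, h P ≤ (1 + 1 / r) * δ ^ (M + 1) * T + C / (1 - δ) := by
    intro M
    have h1 := key (M + 1) []
    simp only [wordComp] at h1
    have h2 : c * ∑ k ∈ Finset.range (M + 1), δ ^ k ≤ C / (1 - δ) := by
      calc c * ∑ k ∈ Finset.range (M + 1), δ ^ k ≤ c * (1 / (1 - δ)) :=
            mul_le_mul_of_nonneg_left (hsum (M + 1)) hc0
        _ ≤ C * (1 / (1 - δ)) := by
            apply mul_le_mul_of_nonneg_right _ (by positivity)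
            simpa using hcC
        _ = C / (1 - δ) := by ring
    have h3 : δ ^ (M + 1) * T ≤ (1 + 1 / r) * δ ^ (M + 1) * T := by
      nlinarith [mul_nonneg (mul_nonneg (by positivity : (0:ℝ) ≤ 1 / r)
        (pow_nonneg hδ0.le (M + 1))) hT0]
    linarith
  refine ⟨main, ?_⟩
  have htend : Filter.Tendsto (fun M : ℕ => (1 + 1 / r) * δ ^ (M + 1) * T + C / (1 - δ))
      Filter.atTop (nhds ((1 + 1 / r) * 0 * T + C / (1 - δ))) := by
    apply Filter.Tendsto.add _ tendsto_const_nhds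
    apply Filter.Tendsto.mul _ tendsto_const_nhds
    apply Filter.Tendsto.const_mul
    have hp : Filter.Tendsto (fun M : ℕ => δ ^ M) Filter.atTop (nhds 0) :=
      tendsto_pow_atTop_nhds_zero_of_lt_one (le_of_lt hδ0) hδ
    exact hp.comp (Filter.tendsto_add_atTop_nat 1)
  have := ge_of_tendsto' htend main
  simpa using this
end

section
/- Let X be a set, f : X → X a bijection with inverse g, h : X → ℝ nonnegative, and d, d' ≥ 2, C ≥ 0 constants with (1/d)h(f(P)) + (1/d')h(g(P)) + C ≥ (1 + 1/(d·d'))·h(P) for all P ∈ X. Then the set of points P with finite f-orbit {f^k(P) : k ∈ ℤ} has h bounded by a constant depending only on d, d', C. -/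
theorem stmt_8 {X : Type*} (e : Equiv.Perm X) (h : X → ℝ)
    (h0 : ∀ P, 0 ≤ h P) (d d' C : ℝ) (hd : 2 ≤ d) (hd' : 2 ≤ d') (hC : 0 ≤ C)
    (hyp : ∀ P : X,
      (1 + 1 / (d * d')) * h P ≤
        (1 / d) * h (e P) + (1 / d') * h (e.symm P) + C) :
    ∃ B : ℝ, ∀ P : X,
      (Set.range fun k : ℤ => (e ^ k) P).Finite → h P ≤ B := by
  refine ⟨4 * C, fun P hfin => ?_⟩
  set S : Set X := Set.range fun k : ℤ => (e ^ k) P with hS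
  have hne : S.Nonempty := ⟨P, ⟨0, by simp⟩⟩
  obtain ⟨Q, hQS, hQmax⟩ := Set.Finite.exists_maximalFor h S hfin hne
  have hmax : ∀ x ∈ S, h x ≤ h Q := by
    intro x hx
    by_contra hlt
    push_neg at hlt
    exact absurd (hQmax hx hlt.le) (not_le.mpr hlt)
  obtain ⟨k, hk⟩ := hQS
  simp only at hk
  have h1 : e Q ∈ S := by
    refine ⟨1 + k, ?_⟩
    simp only [zpow_add, zpow_one, Equiv.Perm.mul_apply, hk]
  have h2 : e.symm Q ∈ S := by
    refine ⟨-1 + k, ?_⟩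
    simp only [zpow_add, zpow_neg_one, Equiv.Perm.mul_apply, hk, Equiv.Perm.inv_def]
  have hd0 : 0 < d := by linarith
  have hd'0 : 0 < d' := by linarith
  have key := hyp Q
  have hQ1 := hmax _ h1
  have hQ2 := hmax _ h2
  have hQ0 := h0 Q
  have ha : 1 / d ≤ 1 / 2 := by
    apply one_div_le_one_div_of_le <;> linarith
  have hb : 1 / d' ≤ 1 / 2 := by
    apply one_div_le_one_div_of_le <;> linarith
  have ha0 : 0 < 1 / d := by positivity
  have hb0 : 0 < 1 / d' := by positivity
  have hab : 1 / (d * d') = (1 / d) * (1 / d') := by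
    rw [div_mul_div_comm]; norm_num
  rw [hab] at key
  have e1 : (1 + (1 / d) * (1 / d')) * h Q ≤ (1 / d) * h Q + (1 / d') * h Q + C := by
    nlinarith
  nlinarith [mul_nonneg (mul_nonneg (by linarith : (0:ℝ) ≤ 1/2 - 1/d)
      (by linarith : (0:ℝ) ≤ 1/2 - 1/d')) hQ0,
    mul_nonneg hQ0 (by linarith : (0:ℝ) ≤ 1/2 - 1/d),
    mul_nonneg hQ0 (by linarith : (0:ℝ) ≤ 1/2 - 1/d'),
    hmax P ⟨0, by simp⟩, h0 P]
end
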